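/- The function x ↦ Tr((Aᵀ diag(x) A)^{-1}) is convex on the set {x ∈ ℝ^m : x ≥ 0, Aᵀ diag(x) A ≻ 0} (convexity of the A-criterion). -/

import Mathlib

open Matrix

lemma smul_posDef_aux {k : ℕ} {a : ℝ} (ha : 0 < a) {M : Matrix (Fin k) (Fin k) ℝ}
    (hM : M.PosDef) : (a • M).PosDef := by
  have hherm : (a • M).IsHermitian := by
    simp only [Matrix.IsHermitian, Matrix.conjTranspose_smul, star_trivial]
    rw [show Mᴴ = M from hM.1]
  refine Matrix.PosDef.of_dotProduct_mulVec_pos hherm fun x hx => ?_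
  have := hM.dotProduct_mulVec_pos hx
  simp only [smul_mulVec, dotProduct_smul, smul_eq_mul]
  exact mul_pos ha this

lemma combo_posDef {k : ℕ} {P Q : Matrix (Fin k) (Fin k) ℝ} (hP : P.PosDef) (hQ : Q.PosDef)
    {a b : ℝ} (ha : 0 ≤ a) (hb : 0 ≤ b) (hab : a + b = 1) : (a • P + b • Q).PosDef := by
  rcases ha.eq_or_lt with rfl | ha'
  · have hb1 : b = 1 := by linarith
    simpa [hb1] using hQ
  · rcases hb.eq_or_lt with rfl | hb'
    · have ha1 : a = 1 := by linarith
      simpa [ha1] using hP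
    · exact (smul_posDef_aux ha' hP).add (smul_posDef_aux hb' hQ)

lemma key_ineq {k : ℕ} {P : Matrix (Fin k) (Fin k) ℝ} (hP : P.PosDef) (c y : Fin k → ℝ) :
    2 * (c ⬝ᵥ y) - y ⬝ᵥ (P *ᵥ y) ≤ c ⬝ᵥ (P⁻¹ *ᵥ c) := by
  have hsym : Pᵀ = P := hP.1
  have hdet : IsUnit P.det := hP.det_pos.ne'.isUnit
  set w : Fin k → ℝ := P⁻¹ *ᵥ c with hw
  have e1 : P *ᵥ w = c := by
    rw [hw, mulVec_mulVec, Matrix.mul_nonsing_inv P hdet, one_mulVec]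
  have e3 : w ⬝ᵥ (P *ᵥ y) = c ⬝ᵥ y := by
    rw [dotProduct_mulVec, ← Matrix.mulVec_transpose, hsym, e1]
  have h0 : 0 ≤ (y - w) ⬝ᵥ (P *ᵥ (y - w)) := by
    simpa using hP.posSemidef.dotProduct_mulVec_nonneg (y - w)
  have e2 : (y - w) ⬝ᵥ (P *ᵥ (y - w)) =
      y ⬝ᵥ (P *ᵥ y) - y ⬝ᵥ (P *ᵥ w) - (c ⬝ᵥ y - w ⬝ᵥ (P *ᵥ w)) := by
    rw [mulVec_sub, dotProduct_sub, sub_dotProduct, sub_dotProduct, e3]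
    ring
  have e4 : y ⬝ᵥ (P *ᵥ w) = c ⬝ᵥ y := by rw [e1, dotProduct_comm]
  have e5 : w ⬝ᵥ (P *ᵥ w) = c ⬝ᵥ (P⁻¹ *ᵥ c) := by rw [e1, dotProduct_comm, hw]
  rw [e2, e4, e5] at h0
  linarith

lemma entry_convex {k : ℕ} {P Q : Matrix (Fin k) (Fin k) ℝ} (hP : P.PosDef) (hQ : Q.PosDef)
    {a b : ℝ} (ha : 0 ≤ a) (hb : 0 ≤ b) (hab : a + b = 1) (c : Fin k → ℝ) :
    c ⬝ᵥ ((a • P + b • Q)⁻¹ *ᵥ c) ≤ a * (c ⬝ᵥ (P⁻¹ *ᵥ c)) + b * (c ⬝ᵥ (Q⁻¹ *ᵥ c)) := by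
  set R := a • P + b • Q with hR
  have hRpd : R.PosDef := combo_posDef hP hQ ha hb hab
  set u : Fin k → ℝ := R⁻¹ *ᵥ c with hu
  have hRu : R *ᵥ u = c := by
    rw [hu, mulVec_mulVec, Matrix.mul_nonsing_inv R hRpd.det_pos.ne'.isUnit, one_mulVec]
  have h3 : u ⬝ᵥ (R *ᵥ u) = a * (u ⬝ᵥ (P *ᵥ u)) + b * (u ⬝ᵥ (Q *ᵥ u)) := by
    rw [hR, add_mulVec, smul_mulVec, smul_mulVec, dotProduct_add,
      dotProduct_smul, dotProduct_smul, smul_eq_mul, smul_eq_mul]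
  have h4 : u ⬝ᵥ (R *ᵥ u) = c ⬝ᵥ u := by rw [hRu, dotProduct_comm]
  have expand : c ⬝ᵥ (R⁻¹ *ᵥ c) =
      a * (2 * (c ⬝ᵥ u) - u ⬝ᵥ (P *ᵥ u)) + b * (2 * (c ⬝ᵥ u) - u ⬝ᵥ (Q *ᵥ u)) := by
    have : c ⬝ᵥ (R⁻¹ *ᵥ c) = c ⬝ᵥ u := by rw [hu]
    rw [this]
    linear_combination h4 - h3 - 2 * (c ⬝ᵥ u) * hab
  rw [expand]
  exact add_le_add (mul_le_mul_of_nonneg_left (key_ineq hP c u) ha)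
    (mul_le_mul_of_nonneg_left (key_ineq hQ c u) hb)

lemma trace_eq_sum_quad {k : ℕ} (N : Matrix (Fin k) (Fin k) ℝ) :
    N.trace = ∑ j, Pi.single j 1 ⬝ᵥ (N *ᵥ Pi.single j 1) := by
  have h : ∀ j, Pi.single j 1 ⬝ᵥ (N *ᵥ Pi.single j 1) = N j j := by
    intro j
    simp [dotProduct, mulVec, Pi.single_apply, Finset.mul_sum, mul_ite]
  simp [Matrix.trace, Matrix.diag, h]

/-- Convexity of the A-criterion `x ↦ Tr((Aᵀ diag(x) A)⁻¹)` on the set of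
nonnegative weights making the information matrix positive definite. -/
theorem A_criterion_convex
    (m n : ℕ) (A : Matrix (Fin m) (Fin n) ℝ) (hA : A.rank = n) :
    ConvexOn ℝ
      {x : Fin m → ℝ | (∀ i, 0 ≤ x i) ∧ (Aᵀ * Matrix.diagonal x * A).PosDef}
      (fun x => ((Aᵀ * Matrix.diagonal x * A)⁻¹).trace) := by
  have affine : ∀ (x y : Fin m → ℝ) (a b : ℝ),
      Aᵀ * Matrix.diagonal (a • x + b • y) * A =
        a • (Aᵀ * Matrix.diagonal x * A) + b • (Aᵀ * Matrix.diagonal y * A) := by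
    intro x y a b
    have : Matrix.diagonal (a • x + b • y) =
        a • Matrix.diagonal x + b • Matrix.diagonal y := by
      rw [← diagonal_smul, ← diagonal_smul, diagonal_add]
      rfl
    rw [this, Matrix.mul_add, Matrix.add_mul, Matrix.mul_smul, Matrix.mul_smul,
      Matrix.smul_mul, Matrix.smul_mul]
  constructor
  · rintro x ⟨hx0, hxpd⟩ y ⟨hy0, hypd⟩ a b ha hb hab
    refine ⟨fun i => add_nonneg (mul_nonneg ha (hx0 i)) (mul_nonneg hb (hy0 i)), ?_⟩
    rw [affine]
    exact combo_posDef hxpd hypd ha hb hab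
  · rintro x ⟨hx0, hxpd⟩ y ⟨hy0, hypd⟩ a b ha hb hab
    simp only
    rw [affine, trace_eq_sum_quad, trace_eq_sum_quad, trace_eq_sum_quad,
      smul_eq_mul, smul_eq_mul, Finset.mul_sum, Finset.mul_sum, ← Finset.sum_add_distrib]
    exact Finset.sum_le_sum fun j _ => entry_convex hxpd hypd ha hb hab _
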